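/- Let F be a sparseness measure with cost function J on ℝⁿ, let A be an m×n real matrix, let k ≥ 1, and let σmax > 0 be such that ‖A u‖ ≤ σmax‖u‖ for every u ∈ ℝⁿ. If for some d with 0 < d < 1 the matrix A satisfies RRC at sparsity k for J with constant C = 2(1−d)/(d σmax), then the robust null space condition with parameter d holds for (A, k, J). -/

import Mathlib

noncomputable section

/-- `F : ℝ → ℝ` is a sparseness measure: nonnegative on `[0,∞)`,
vanishing exactly at `0`, and `F (|·|)` is subadditive on `ℝ`. -/
def SparsenessMeasure (F : ℝ → ℝ) : Prop :=
  (∀ t : ℝ, 0 ≤ t → 0 ≤ F t) ∧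
  (∀ t : ℝ, 0 ≤ t → (F t = 0 ↔ t = 0)) ∧
  (∀ x y : ℝ, F |x + y| ≤ F |x| + F |y|)

/-- The cost function `J(x) = ∑ i, F |x i|` on `ℝⁿ`. -/
def costJ {n : ℕ} (F : ℝ → ℝ) (x : EuclideanSpace ℝ (Fin n)) : ℝ :=
  ∑ i, F |x i|

/-- The restricted cost `J(x_T) = ∑ i ∈ T, F |x i|`. -/
def costJT {n : ℕ} (F : ℝ → ℝ) (T : Finset (Fin n)) (x : EuclideanSpace ℝ (Fin n)) : ℝ :=
  ∑ i ∈ T, F |x i|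

/-- `x` has at most `k` nonzero entries. -/
def Sparse {n : ℕ} (k : ℕ) (x : EuclideanSpace ℝ (Fin n)) : Prop :=
  ∃ T : Finset (Fin n), T.card ≤ k ∧ ∀ i ∉ T, x i = 0

/-- The matrix `A` acting as a continuous linear map between Euclidean spaces. -/
def mulVecCLM {m n : ℕ} (A : Matrix (Fin m) (Fin n) ℝ) :
    EuclideanSpace ℝ (Fin n) →L[ℝ] EuclideanSpace ℝ (Fin m) :=
  (((EuclideanSpace.equiv (Fin m) ℝ).symm : (Fin m → ℝ) →L[ℝ] EuclideanSpace ℝ (Fin m)).comp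
    (Matrix.mulVecLin A).toContinuousLinearMap).comp
    ((EuclideanSpace.equiv (Fin n) ℝ) : EuclideanSpace ℝ (Fin n) →L[ℝ] (Fin n → ℝ))

/-- `A` satisfies the robust recovery condition at sparsity `k` for the cost `J_F`
with constant `C`: for every `k`-sparse `x̄`, every `ε > 0`, every noise `v` with
`‖v‖ ≤ ε`, and every feasible `x̂` with `J(x̂) ≤ J(x̄)`, one has `‖x̄ - x̂‖ ≤ C ε`. -/
def RRC {m n : ℕ} (A : Matrix (Fin m) (Fin n) ℝ) (k : ℕ) (F : ℝ → ℝ) (C : ℝ) : Prop :=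
  ∀ xbar : EuclideanSpace ℝ (Fin n), Sparse k xbar →
    ∀ ε : ℝ, 0 < ε →
      ∀ v : EuclideanSpace ℝ (Fin m), ‖v‖ ≤ ε →
        ∀ xhat : EuclideanSpace ℝ (Fin n),
          ‖mulVecCLM A xhat - (mulVecCLM A xbar + v)‖ ≤ ε →
            costJ F xhat ≤ costJ F xbar → ‖xbar - xhat‖ ≤ C * ε

/-- The robust null space condition with parameter `d` for `(A, k, J_F)`. -/
def RNSP {m n : ℕ} (A : Matrix (Fin m) (Fin n) ℝ) (k : ℕ) (F : ℝ → ℝ) (d : ℝ) : Prop :=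
  ∀ z ∈ LinearMap.ker (mulVecCLM A : EuclideanSpace ℝ (Fin n) →ₗ[ℝ] EuclideanSpace ℝ (Fin m)), z ≠ 0 →
    ∀ η : EuclideanSpace ℝ (Fin n), ‖η‖ < d * ‖z‖ →
      ∀ T : Finset (Fin n), T.card ≤ k →
        costJT F T (z + η) < costJT F Tᶜ (z + η)

/-- converse part of Theorem 1: if `‖A u‖ ≤ σmax ‖u‖` for all `u`,
`0 < d < 1`, and `A` satisfies RRC at sparsity `k` for `J` with `C = 2(1−d)/(d σmax)`,
then the robust null space condition with parameter `d` holds for `(A, k, J)`. -/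
theorem stmt1 {m n : ℕ} (F : ℝ → ℝ) (hF : SparsenessMeasure F)
    (A : Matrix (Fin m) (Fin n) ℝ) (k : ℕ) (hk : 1 ≤ k)
    (σmax : ℝ) (hσ : 0 < σmax)
    (hσA : ∀ u : EuclideanSpace ℝ (Fin n), ‖mulVecCLM A u‖ ≤ σmax * ‖u‖)
    (d : ℝ) (hd0 : 0 < d) (hd1 : d < 1)
    (hrrc : RRC A k F (2 * (1 - d) / (d * σmax))) :
    RNSP A k F d := by
  intro z hz hz0 η hη T hT
  by_contra hcon
  push_neg at hcon
  set w : EuclideanSpace ℝ (Fin n) := z + η with hw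
  have hF0 : F 0 = 0 := (hF.2.1 0 le_rfl).mpr rfl
  have hzpos : 0 < ‖z‖ := norm_pos_iff.mpr hz0
  -- sparse vector and candidate
  set xbar : EuclideanSpace ℝ (Fin n) := WithLp.toLp 2 (fun i => if i ∈ T then w i else 0) with hxbar
  set xhat : EuclideanSpace ℝ (Fin n) := WithLp.toLp 2 (fun i => if i ∈ T then 0 else -(w i)) with hxhat
  have hsub : xbar - xhat = w := by
    ext i
    simp only [PiLp.sub_apply, hxbar, hxhat, PiLp.toLp_apply]
    split_ifs <;> ring
  have hAz : mulVecCLM A z = 0 := hz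
  have hAw : mulVecCLM A w = mulVecCLM A η := by
    rw [hw, map_add, hAz, zero_add]
  have hAηle : ‖mulVecCLM A η‖ ≤ σmax * ‖η‖ := hσA η
  have hAηlt : ‖mulVecCLM A η‖ < σmax * (d * ‖z‖) := by
    calc ‖mulVecCLM A η‖ ≤ σmax * ‖η‖ := hAηle
    _ < σmax * (d * ‖z‖) := by exact mul_lt_mul_of_pos_left hη hσ
  set ε : ℝ := (‖mulVecCLM A η‖ / 2 + d * σmax * ‖z‖ / 2) / 2 with hε
  have hεpos : 0 < ε := by
    have h1 : 0 ≤ ‖mulVecCLM A η‖ := norm_nonneg _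
    have h2 : 0 < d * σmax * ‖z‖ := by positivity
    rw [hε]; linarith
  have hεlt : ε < d * σmax * ‖z‖ / 2 := by
    rw [hε]; nlinarith [hAηlt]
  have hεge : ‖mulVecCLM A η‖ / 2 ≤ ε := by
    rw [hε]; nlinarith [hAηlt]
  set v : EuclideanSpace ℝ (Fin m) := -((1/2 : ℝ) • mulVecCLM A w) with hv
  have hvnorm : ‖v‖ = ‖mulVecCLM A η‖ / 2 := by
    rw [hv, norm_neg, norm_smul, hAw]
    simp
    ring
  have hsparse : Sparse k xbar := by
    refine ⟨T, hT, fun i hi => ?_⟩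
    simp [hxbar, hi]
  have hfeas : ‖mulVecCLM A xhat - (mulVecCLM A xbar + v)‖ ≤ ε := by
    have h1 : mulVecCLM A xhat - mulVecCLM A xbar = -(mulVecCLM A w) := by
      rw [← map_sub, ← hsub]
      simp [map_sub]
    have h2 : mulVecCLM A xhat - (mulVecCLM A xbar + v)
        = -((1/2 : ℝ) • mulVecCLM A w) := by
      rw [sub_add_eq_sub_sub, h1, hv]
      module
    rw [h2, norm_neg, norm_smul, hAw]
    have h3 : ‖(1/2 : ℝ)‖ = 1/2 := by norm_num [Real.norm_eq_abs]
    rw [h3]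
    linarith [hεge]
  have hcostbar : costJ F xbar = costJT F T w := by
    unfold costJ costJT
    rw [← Finset.sum_add_sum_compl T]
    have h1 : ∑ i ∈ T, F |xbar i| = ∑ i ∈ T, F |w i| :=
      Finset.sum_congr rfl (fun i hi => by simp [hxbar, hi])
    have h2 : ∑ i ∈ Tᶜ, F |xbar i| = 0 := by
      apply Finset.sum_eq_zero
      intro i hi
      have : i ∉ T := by simpa using hi
      simp [hxbar, this, hF0]
    rw [h1, h2, add_zero]
  have hcosthat : costJ F xhat = costJT F Tᶜ w := by
    unfold costJ costJT
    rw [← Finset.sum_add_sum_compl T]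
    have h1 : ∑ i ∈ T, F |xhat i| = 0 := by
      apply Finset.sum_eq_zero
      intro i hi
      simp [hxhat, hi, hF0]
    have h2 : ∑ i ∈ Tᶜ, F |xhat i| = ∑ i ∈ Tᶜ, F |w i| := by
      apply Finset.sum_congr rfl
      intro i hi
      have : i ∉ T := by simpa using hi
      simp [hxhat, this]
    rw [h1, h2, zero_add]
  have hcost : costJ F xhat ≤ costJ F xbar := by
    rw [hcostbar, hcosthat]; exact hcon
  have hrec := hrrc xbar hsparse ε hεpos v (le_of_eq_of_le hvnorm hεge) xhat hfeas hcost
  rw [hsub] at hrec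
  have hC : (0:ℝ) < 2 * (1 - d) / (d * σmax) :=
    div_pos (by linarith) (by positivity)
  have hCε : 2 * (1 - d) / (d * σmax) * ε < (1 - d) * ‖z‖ := by
    have heq : 2 * (1 - d) / (d * σmax) * (d * σmax * ‖z‖ / 2) = (1 - d) * ‖z‖ := by
      field_simp
    calc 2 * (1 - d) / (d * σmax) * ε
        < 2 * (1 - d) / (d * σmax) * (d * σmax * ‖z‖ / 2) :=
          mul_lt_mul_of_pos_left hεlt hC
      _ = (1 - d) * ‖z‖ := heq
  have hzw : ‖z‖ ≤ ‖w‖ + ‖η‖ := by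
    have : z = w - η := by rw [hw]; abel
    rw [this]
    exact norm_sub_le _ _
  linarith
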